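/- Let F₂ be the free group on two generators x and y, and let Q be the quotient of ℤ[F₂] by the additive subgroup generated by all elements [g] − [(x²y)ᵃ·g·(x²y)ᵇ] (g ∈ F₂, a, b ∈ ℤ), all elements [g] − [g⁻¹] (g ∈ F₂), the element [1], and all elements [g] − [g·x⁻²] (g ∈ F₂). Then the image in Q of the basis element [x·y·x⁻¹] is nonzero. -/
import Mathlib


noncomputable section

/-- The free group on two generators `x` and `y`. -/
abbrev F2 := FreeGroup (Fin 2)

/-- The generator `x`. -/
def x : F2 := FreeGroup.of 0

/-- The generator `y`. -/
def y : F2 := FreeGroup.of 1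

/-- The basis element `[g]` of the free abelian group `ℤ[F₂]`. -/
def e (g : F2) : F2 →₀ ℤ := Finsupp.single g 1

/-- The additive subgroup of `ℤ[F₂]` generated by all `[g] − [(x²y)ᵃ·g·(x²y)ᵇ]`,
all `[g] − [g⁻¹]`, the element `[1]`, and all `[g] − [g·x⁻²]`. -/
def qRel : AddSubgroup (F2 →₀ ℤ) :=
  AddSubgroup.closure
    ({v | ∃ (g : F2) (a b : ℤ), v = e g - e ((x * x * y) ^ a * g * (x * x * y) ^ b)} ∪
      {v | ∃ g : F2, v = e g - e g⁻¹} ∪ {e (1 : F2)} ∪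
      {v | ∃ g : F2, v = e g - e (g * x⁻¹ * x⁻¹)})

/-- The paper's target group `Λ̃_{x²y}/Φ(k)`. -/
abbrev Q := (F2 →₀ ℤ) ⧸ qRel

def ρ : F2 →* Equiv.Perm (Fin 3) :=
  FreeGroup.lift (fun i => if i = 0 then Equiv.swap 0 1 else Equiv.swap 1 2)

lemma ρx : ρ x = Equiv.swap 0 1 := by simp [ρ, x]
lemma ρy : ρ y = Equiv.swap 1 2 := by simp [ρ, y]

def f (g : F2) : ℤ := if (ρ g) 0 = 0 ∧ (ρ g)⁻¹ 0 = 0 then 0 else 1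

lemma zpow_fix {σ : Equiv.Perm (Fin 3)} (h : σ 0 = 0) (a : ℤ) : (σ ^ a) 0 = 0 := by
  have hmem : σ ∈ MulAction.stabilizer (Equiv.Perm (Fin 3)) (0 : Fin 3) := by
    simpa [MulAction.mem_stabilizer_iff, Equiv.Perm.smul_def] using h
  have := zpow_mem hmem a
  simpa [MulAction.mem_stabilizer_iff, Equiv.Perm.smul_def] using this

lemma inv_fix {σ : Equiv.Perm (Fin 3)} (h : σ 0 = 0) : σ⁻¹ 0 = 0 := by
  conv_lhs => rw [← h]
  simp

lemma cond_conj {Q R P : Equiv.Perm (Fin 3)} (hQ : Q 0 = 0) (hR : R 0 = 0) :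
    ((Q * P * R) 0 = 0 ∧ (Q * P * R)⁻¹ 0 = 0) ↔ (P 0 = 0 ∧ P⁻¹ 0 = 0) := by
  have hQ' := inv_fix hQ
  have hR' := inv_fix hR
  constructor
  · rintro ⟨h1, h2⟩
    constructor
    · apply Q.injective
      simpa [Equiv.Perm.mul_apply, hR, hQ] using h1
    · apply R⁻¹.injective
      simpa [mul_inv_rev, Equiv.Perm.mul_apply, hQ', hR'] using h2
  · rintro ⟨h1, h2⟩
    constructor
    · simp [Equiv.Perm.mul_apply, hR, h1, hQ]
    · simp [mul_inv_rev, Equiv.Perm.mul_apply, hQ', h2, hR']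

def φ : (F2 →₀ ℤ) →+ ℤ := Finsupp.liftAddHom (fun g => AddMonoidHom.mulRight (f g))

lemma φ_e (g : F2) : φ (e g) = f g := by
  simp [φ, e]

lemma γfix : (ρ (x * x * y)) 0 = 0 := by
  simp only [map_mul, ρx, ρy, Equiv.Perm.mul_apply]
  decide

lemma qRel_le : qRel ≤ φ.ker := by
  rw [qRel]
  apply AddSubgroup.closure_le _ |>.2
  rintro v (((⟨g, a, b, rfl⟩ | ⟨g, rfl⟩) | rfl) | ⟨g, rfl⟩)
  · have : f ((x * x * y) ^ a * g * (x * x * y) ^ b) = f g := by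
      unfold f
      rw [map_mul, map_mul, map_zpow, map_zpow,
        if_congr (cond_conj (zpow_fix γfix a) (zpow_fix γfix b)) rfl rfl]
    simp [map_sub, φ_e, this]
  · have : f g⁻¹ = f g := by
      unfold f
      simp only [map_inv, inv_inv]
      rw [if_congr and_comm rfl rfl]
    simp [map_sub, φ_e, this]
  · have : f 1 = 0 := by simp [f]
    simp [φ_e, this]
  · have : ρ (g * x⁻¹ * x⁻¹) = ρ g := by
      have : ρ x * ρ x = 1 := by rw [ρx]; decide
      rw [map_mul, map_mul, map_inv, mul_assoc, ← mul_inv_rev, ← map_mul, map_mul,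
        this, inv_one, mul_one]
    have hf : f (g * x⁻¹ * x⁻¹) = f g := by unfold f; rw [this]
    simp [map_sub, φ_e, hf]

lemma fb : f (x * y * x⁻¹) = 1 := by
  unfold f
  rw [if_neg]
  rintro ⟨h1, -⟩
  rw [map_mul, map_mul, map_inv, ρx, ρy] at h1
  revert h1
  decide

theorem stmt14 : (QuotientAddGroup.mk (e (x * y * x⁻¹)) : Q) ≠ 0 := by
  intro h
  have hmem : e (x * y * x⁻¹) ∈ qRel := (QuotientAddGroup.eq_zero_iff _).mp h
  have := qRel_le hmem
  rw [AddMonoidHom.mem_ker, φ_e, fb] at this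
  exact one_ne_zero this
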